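/- Pentagon coherence for a single associative-up-to-isomorphism composition with strict units: if a binary operation on objects of a category carries a natural associator α satisfying Mac Lane's pentagon axiom and strict unit identities (with α equal to the identity whenever one of its arguments is a unit), then any two iterated-associator isomorphisms between two bracketings of a fixed sequence of n factors are equal. -/

import Mathlib

open CategoryTheory

universe u v

/-- A simplified (one-direction, `n = 1`) model of a pseudo `n`-fold
category: a category `kMor = C` with a composition `op` acting functorially
on morphisms via `map`, together with a natural associator isomorphism `α`
satisfying Mac Lane's pentagon axiom. -/
structure CompStruct (C : Type u) [Category.{v} C] where
  op : C → C → C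
  map : ∀ {a b c d : C}, (a ⟶ b) → (c ⟶ d) → (op a c ⟶ op b d)
  map_id : ∀ a b : C, map (𝟙 a) (𝟙 b) = 𝟙 (op a b)
  map_comp : ∀ {a b c d e f : C} (g₁ : a ⟶ b) (g₂ : b ⟶ c) (h₁ : d ⟶ e) (h₂ : e ⟶ f),
    map (g₁ ≫ g₂) (h₁ ≫ h₂) = map g₁ h₁ ≫ map g₂ h₂
  assoc : ∀ a b c : C, op (op a b) c ≅ op a (op b c)
  assoc_natural : ∀ {a a' b b' c c' : C} (f : a ⟶ a') (g : b ⟶ b') (h : c ⟶ c'),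
    map (map f g) h ≫ (assoc a' b' c').hom = (assoc a b c).hom ≫ map f (map g h)
  pentagon : ∀ a b c d : C,
    map (assoc a b c).hom (𝟙 d) ≫ (assoc a (op b c) d).hom ≫
        map (𝟙 a) (assoc b c d).hom =
      (assoc (op a b) c d).hom ≫ (assoc a b (op c d)).hom

/-- Bracketings (parenthesizations) of a sequence of factors, encoded as
binary trees with objects of `C` at the leaves. -/
inductive BTree (C : Type u) : Type u
  | leaf : C → BTree C
  | node : BTree C → BTree C → BTree C

/-- The sequence of factors of a bracketing. -/
def BTree.leaves {C : Type u} : BTree C → List C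
  | .leaf a => [a]
  | .node l r => l.leaves ++ r.leaves

/-- Evaluation of a bracketing: the corresponding composition. -/
def evalT {C : Type u} [Category.{v} C] (S : CompStruct C) : BTree C → C
  | .leaf a => a
  | .node l r => S.op (evalT S l) (evalT S r)

/-- Formal coherence morphisms between bracketings: composites of whiskered
instances of the associator `α` and its inverse. -/
inductive Move {C : Type u} : BTree C → BTree C → Type u
  | id (t : BTree C) : Move t t
  | assoc (a b c : BTree C) : Move ((a.node b).node c) (a.node (b.node c))
  | assocInv (a b c : BTree C) : Move (a.node (b.node c)) ((a.node b).node c)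
  | whiskerR {a b : BTree C} (c : BTree C) : Move a b → Move (a.node c) (b.node c)
  | whiskerL {a b : BTree C} (c : BTree C) : Move a b → Move (c.node a) (c.node b)
  | comp {a b c : BTree C} : Move a b → Move b c → Move a c

/-- Interpretation of a formal coherence morphism as an actual morphism,
built from the associators `α` by whiskering and composition. -/
def interp {C : Type u} [Category.{v} C] (S : CompStruct C) :
    ∀ {a b : BTree C}, Move a b → (evalT S a ⟶ evalT S b)
  | _, _, .id _ => 𝟙 _
  | _, _, .assoc _ _ _ => (S.assoc _ _ _).hom
  | _, _, .assocInv _ _ _ => (S.assoc _ _ _).inv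
  | _, _, .whiskerR _ m => S.map (interp S m) (𝟙 _)
  | _, _, .whiskerL _ m => S.map (𝟙 _) (interp S m)
  | _, _, .comp m₁ m₂ => interp S m₁ ≫ interp S m₂

/-- A composition with strict two-sided unit: the associator is required to be
the identity (an `eqToHom`) whenever one of its arguments is the unit. -/
structure UnitalCompStruct (C : Type u) [Category.{v} C] extends CompStruct C where
  one : C
  one_op : ∀ a : C, op one a = a
  op_one : ∀ a : C, op a one = a
  assoc_unit_left : ∀ b c : C,
    (assoc one b c).hom = eqToHom (by
      show op (op one b) c = op one (op b c); rw [one_op b, one_op (op b c)])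
  assoc_unit_mid : ∀ a c : C,
    (assoc a one c).hom = eqToHom (by
      show op (op a one) c = op a (op one c); rw [op_one a, one_op c])
  assoc_unit_right : ∀ a b : C,
    (assoc a b one).hom = eqToHom (by
      show op (op a b) one = op a (op b one); rw [op_one (op a b), op_one b])

/-! ### Auxiliary development for the coherence proof -/

namespace PentagonCoherenceAux

/-- Graft a tree onto a right comb: fully right-associated splice. -/
def graft {C : Type u} : BTree C → BTree C → BTree C
  | .leaf a, n => .node (.leaf a) n
  | .node l r, n => graft l (graft r n)

/-- Right comb built from a list of leaves, ending in `n`. -/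
def rcombL {C : Type u} : List C → BTree C → BTree C
  | [], n => n
  | x :: l, n => .node (.leaf x) (rcombL l n)

/-- Canonical coherence move from `t.node n` to `graft t n`. -/
def canG {C : Type u} : (t n : BTree C) → Move (t.node n) (graft t n)
  | .leaf _, _ => .id _
  | .node l r, n =>
      .comp (.assoc l r n) (.comp (.whiskerL l (canG r n)) (canG l (graft r n)))

/-- Right-comb normal form of a tree. -/
def normT {C : Type u} : BTree C → BTree C
  | .leaf a => .leaf a
  | .node l r => graft l (normT r)

/-- Canonical coherence move from a tree to its normal form. -/
def canT {C : Type u} : (t : BTree C) → Move t (normT t)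
  | .leaf _ => .id _
  | .node l r => .comp (.whiskerL l (canT r)) (canG l (normT r))

lemma rcombL_append {C : Type u} (l₁ l₂ : List C) (n : BTree C) :
    rcombL (l₁ ++ l₂) n = rcombL l₁ (rcombL l₂ n) := by
  induction l₁ with
  | nil => rfl
  | cons x l ih => simp [rcombL, ih]

lemma graft_leaves {C : Type u} (t n : BTree C) :
    graft t n = rcombL t.leaves n := by
  induction t generalizing n with
  | leaf a => rfl
  | node l r ihl ihr => simp [graft, BTree.leaves, rcombL_append, ihl, ihr]

lemma leaves_eq {C : Type u} {a b : BTree C} (m : Move a b) :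
    a.leaves = b.leaves := by
  induction m with
  | id t => rfl
  | assoc a b c => simp [BTree.leaves, List.append_assoc]
  | assocInv a b c => simp [BTree.leaves, List.append_assoc]
  | whiskerR c m ih => simp [BTree.leaves, ih]
  | whiskerL c m ih => simp [BTree.leaves, ih]
  | comp m₁ m₂ ih₁ ih₂ => exact ih₁.trans ih₂

lemma graft_congr {C : Type u} {a b : BTree C} (hl : a.leaves = b.leaves)
    (n : BTree C) : graft a n = graft b n := by
  rw [graft_leaves, graft_leaves, hl]

/-- Nonempty right comb of a list of leaves. -/
def nflAux {C : Type u} : C → List C → BTree C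
  | x, [] => .leaf x
  | x, y :: l => .node (.leaf x) (nflAux y l)

lemma rcombL_nflAux {C : Type u} (y : C) (ys : List C) (x : C) (l : List C) :
    rcombL (y :: ys) (nflAux x l) = nflAux y (ys ++ x :: l) := by
  induction ys generalizing y with
  | nil => rfl
  | cons z zs ih =>
      show (BTree.leaf y).node (rcombL (z :: zs) (nflAux x l))
          = (BTree.leaf y).node (nflAux z (zs ++ x :: l))
      rw [ih z]

lemma leaves_ne_nil {C : Type u} (t : BTree C) : t.leaves ≠ [] := by
  induction t with
  | leaf a => simp [BTree.leaves]
  | node l r ihl ihr => simp [BTree.leaves, ihl, ihr]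

lemma normT_eq {C : Type u} (t : BTree C) (x : C) (l : List C)
    (h : t.leaves = x :: l) : normT t = nflAux x l := by
  induction t generalizing x l with
  | leaf a =>
      simp [BTree.leaves] at h
      obtain ⟨rfl, rfl⟩ := h
      rfl
  | node lt rt ihl ihr =>
      rcases hr : rt.leaves with _ | ⟨y, yr⟩
      · exact absurd hr (leaves_ne_nil rt)
      · rcases hl : lt.leaves with _ | ⟨z, zs⟩
        · exact absurd hl (leaves_ne_nil lt)
        · have hnr : normT rt = nflAux y yr := ihr y yr hr
          have : normT (lt.node rt) = nflAux z (zs ++ y :: yr) := by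
            show graft lt (normT rt) = _
            rw [hnr, graft_leaves, hl, rcombL_nflAux]
          rw [this]
          have h' : (z :: zs) ++ (y :: yr) = x :: l := by
            rw [← hl, ← hr]; exact h
          simp at h'
          obtain ⟨rfl, rfl⟩ := h'
          rfl

lemma normT_congr {C : Type u} {a b : BTree C} (hl : a.leaves = b.leaves) :
    normT a = normT b := by
  rcases ha : a.leaves with _ | ⟨x, l⟩
  · exact absurd ha (leaves_ne_nil a)
  · rw [normT_eq a x l ha, normT_eq b x l (hl ▸ ha)]

section Semantics

variable {C : Type u} [Category.{v} C] (S : CompStruct C)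

lemma eqToHom_self {X : C} (h : X = X) : eqToHom h = 𝟙 X := rfl

lemma nat_id_id (x y : C) {c c' : C} (h : c ⟶ c') :
    S.map (𝟙 (S.op x y)) h ≫ (S.assoc x y c').hom
      = (S.assoc x y c).hom ≫ S.map (𝟙 x) (S.map (𝟙 y) h) := by
  have := S.assoc_natural (𝟙 x) (𝟙 y) h
  rwa [S.map_id] at this

lemma nat_f_id {x x' : C} (f : x ⟶ x') (y c : C) :
    S.map (S.map f (𝟙 y)) (𝟙 c) ≫ (S.assoc x' y c).hom
      = (S.assoc x y c).hom ≫ S.map f (𝟙 (S.op y c)) := by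
  have := S.assoc_natural f (𝟙 y) (𝟙 c)
  rwa [S.map_id] at this

lemma nat_id_f (x : C) {y y' : C} (f : y ⟶ y') (c : C) :
    S.map (S.map (𝟙 x) f) (𝟙 c) ≫ (S.assoc x y' c).hom
      = (S.assoc x y c).hom ≫ S.map (𝟙 x) (S.map f (𝟙 c)) :=
  S.assoc_natural (𝟙 x) f (𝟙 c)

lemma exchange {a b c d : C} (f : a ⟶ b) (g : c ⟶ d) :
    S.map f (𝟙 c) ≫ S.map (𝟙 b) g = S.map (𝟙 a) g ≫ S.map f (𝟙 d) := by
  rw [← S.map_comp, ← S.map_comp]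
  simp

lemma map_id_comp (x : C) {a b c : C} (f : a ⟶ b) (g : b ⟶ c) :
    S.map (𝟙 x) (f ≫ g) = S.map (𝟙 x) f ≫ S.map (𝟙 x) g := by
  rw [← S.map_comp]
  simp

lemma canG_eqToHom (c : BTree C) {n n' : BTree C} (e : n = n')
    (h1 : evalT S n = evalT S n')
    (h2 : evalT S (graft c n) = evalT S (graft c n')) :
    S.map (𝟙 (evalT S c)) (eqToHom h1) ≫ interp S (canG c n')
      = interp S (canG c n) ≫ eqToHom h2 := by
  subst e
  rw [eqToHom_self h1, eqToHom_self h2, S.map_id]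
  simp
  exact Category.id_comp _

lemma interp_isIso : ∀ {a b : BTree C} (m : Move a b), IsIso (interp S m) := by
  intro a b m
  induction m with
  | id t => exact inferInstanceAs (IsIso (𝟙 _))
  | assoc a b c => exact Iso.isIso_hom _
  | assocInv a b c => exact Iso.isIso_inv _
  | whiskerR c m ih =>
      refine ⟨S.map (inv (interp S m)) (𝟙 _), ?_, ?_⟩ <;>
        · simp only [interp, evalT]
          rw [← S.map_comp]
          simp [S.map_id]
  | whiskerL c m ih =>
      refine ⟨S.map (𝟙 _) (inv (interp S m)), ?_, ?_⟩ <;>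
        · simp only [interp, evalT]
          rw [← S.map_comp]
          simp [S.map_id]
  | comp m₁ m₂ ih₁ ih₂ => exact @IsIso.comp_isIso _ _ _ _ _ _ _ ih₁ ih₂

lemma glem_assoc (x y z n : BTree C) :
    S.map (S.assoc (evalT S x) (evalT S y) (evalT S z)).hom (𝟙 (evalT S n)) ≫
        interp S (canG (x.node (y.node z)) n)
      = interp S (canG ((x.node y).node z) n) := by
  simp only [canG, interp, graft, evalT, Category.assoc]
  repeat erw [Category.assoc]
  erw [map_id_comp S, map_id_comp S]
  repeat erw [Category.assoc]
  erw [reassoc_of% (S.pentagon (evalT S x) (evalT S y) (evalT S z) (evalT S n))]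
  erw [reassoc_of% (nat_id_id S (evalT S x) (evalT S y) (interp S (canG z n)))]
  rfl

lemma glem {a b : BTree C} (m : Move a b) :
    ∀ (n : BTree C) (h : evalT S (graft a n) = evalT S (graft b n)),
      S.map (interp S m) (𝟙 (evalT S n)) ≫ interp S (canG b n)
        = interp S (canG a n) ≫ eqToHom h := by
  induction m with
  | id t =>
      intro n h
      erw [eqToHom_self h]
      simp [interp, S.map_id]
      exact Category.id_comp _
  | assoc x y z =>
      intro n h
      erw [eqToHom_self h, Category.comp_id]
      exact glem_assoc S x y z n
  | assocInv x y z =>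
      intro n h
      erw [eqToHom_self h, Category.comp_id]
      erw [← glem_assoc S x y z n]
      simp only [interp, ← Category.assoc]
      repeat erw [Category.assoc]
      have hh : S.map (S.assoc (evalT S x) (evalT S y) (evalT S z)).inv (𝟙 (evalT S n)) ≫
          S.map (S.assoc (evalT S x) (evalT S y) (evalT S z)).hom (𝟙 (evalT S n)) = 𝟙 _ := by
        rw [← S.map_comp]; simp [S.map_id]
      exact (reassoc_of% hh) _
  | @whiskerR a' b' c m ih =>
      intro n h
      have h' : evalT S (graft a' (graft c n)) = evalT S (graft b' (graft c n)) :=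
        congrArg (evalT S) (graft_congr (leaves_eq m) (graft c n))
      simp only [interp, canG, evalT, Category.assoc]
      repeat erw [Category.assoc]
      erw [reassoc_of% (nat_f_id S (interp S m) (evalT S c) (evalT S n))]
      erw [reassoc_of% (exchange S (interp S m)
        (show S.op (evalT S c) (evalT S n) ⟶ evalT S (graft c n) from interp S (canG c n)))]
      erw [ih (graft c n) h']
      rfl
  | @whiskerL a' b' c m ih =>
      intro n h
      have h' : evalT S (graft a' n) = evalT S (graft b' n) :=
        congrArg (evalT S) (graft_congr (leaves_eq m) n)
      have e : graft a' n = graft b' n := graft_congr (leaves_eq m) n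
      simp only [interp, canG, evalT, Category.assoc]
      repeat erw [Category.assoc]
      erw [reassoc_of% (nat_id_f S (evalT S c) (interp S m) (evalT S n))]
      erw [reassoc_of% (map_id_comp S (evalT S c) (S.map (interp S m) (𝟙 (evalT S n)))
        (interp S (canG b' n))).symm]
      erw [ih n h']
      erw [map_id_comp S]
      repeat erw [Category.assoc]
      erw [canG_eqToHom S c e h' h]
      rfl
  | @comp a' b' c' m₁ m₂ ih₁ ih₂ =>
      intro n h
      have h₁ : evalT S (graft a' n) = evalT S (graft b' n) :=
        congrArg (evalT S) (graft_congr (leaves_eq m₁) n)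
      have h₂ : evalT S (graft b' n) = evalT S (graft c' n) :=
        congrArg (evalT S) (graft_congr (leaves_eq m₂) n)
      have : S.map (interp S m₁ ≫ interp S m₂) (𝟙 (evalT S n))
          = S.map (interp S m₁) (𝟙 (evalT S n)) ≫ S.map (interp S m₂) (𝟙 (evalT S n)) := by
        erw [← S.map_comp]; simp
      simp only [interp]
      erw [this, Category.assoc, ih₂ n h₂, ← Category.assoc, ih₁ n h₁]
      erw [Category.assoc, eqToHom_trans]
      rfl

lemma tlem_assoc (x y z : BTree C) :
    (S.assoc (evalT S x) (evalT S y) (evalT S z)).hom ≫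
        interp S (canT (x.node (y.node z)))
      = interp S (canT ((x.node y).node z)) := by
  simp only [canT, canG, normT, interp, evalT, Category.assoc]
  repeat erw [Category.assoc]
  erw [map_id_comp S]
  repeat erw [Category.assoc]
  erw [reassoc_of% (nat_id_id S (evalT S x) (evalT S y) (interp S (canT z)))]
  rfl

lemma tlem {a b : BTree C} (m : Move a b) :
    ∀ (h : evalT S (normT a) = evalT S (normT b)),
      interp S m ≫ interp S (canT b) = interp S (canT a) ≫ eqToHom h := by
  induction m with
  | id t =>
      intro h
      erw [eqToHom_self h]
      simp [interp]
  | assoc x y z =>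
      intro h
      erw [eqToHom_self h, Category.comp_id]
      exact tlem_assoc S x y z
  | assocInv x y z =>
      intro h
      erw [eqToHom_self h, Category.comp_id]
      erw [← tlem_assoc S x y z]
      simp only [interp, Iso.inv_hom_id_assoc]
      erw [Iso.inv_hom_id_assoc]
  | @whiskerR a' b' c m ih =>
      intro h
      simp only [interp, canT, evalT, Category.assoc]
      repeat erw [Category.assoc]
      erw [reassoc_of% (exchange S (interp S m) (interp S (canT c)))]
      erw [glem S m (normT c) h]
      rfl
  | @whiskerL a' b' c m ih =>
      intro h
      have e : normT a' = normT b' := normT_congr (leaves_eq m)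
      have h' : evalT S (normT a') = evalT S (normT b') := congrArg (evalT S) e
      simp only [interp, canT, evalT, Category.assoc]
      repeat erw [Category.assoc]
      erw [reassoc_of% (map_id_comp S (evalT S c) (interp S m) (interp S (canT b'))).symm]
      erw [ih h', map_id_comp S]
      repeat erw [Category.assoc]
      erw [canG_eqToHom S c e h' h]
      rfl
  | @comp a' b' c' m₁ m₂ ih₁ ih₂ =>
      intro h
      have h₁ : evalT S (normT a') = evalT S (normT b') :=
        congrArg (evalT S) (normT_congr (leaves_eq m₁))
      have h₂ : evalT S (normT b') = evalT S (normT c') :=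
        congrArg (evalT S) (normT_congr (leaves_eq m₂))
      simp only [interp, Category.assoc]
      repeat erw [Category.assoc]
      erw [ih₂ h₂, reassoc_of% (ih₁ h₁)]
      simp

lemma move_unique {a b : BTree C} (m₁ m₂ : Move a b) :
    interp S m₁ = interp S m₂ := by
  have h : evalT S (normT a) = evalT S (normT b) :=
    congrArg (evalT S) (normT_congr (leaves_eq m₁))
  have e₁ := tlem S m₁ h
  have e₂ := tlem S m₂ h
  have : IsIso (interp S (canT b)) := interp_isIso S (canT b)
  exact (cancel_mono (interp S (canT b))).mp (e₁.trans e₂.symm)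

end Semantics

end PentagonCoherenceAux

/-- **Pentagon coherence with strict units** (regular coherence in a single
direction): if a binary composition on a category carries a natural associator
`α` satisfying Mac Lane's pentagon axiom and strict unit identities (with `α`
the identity whenever one of its arguments is a unit), then any two
iterated-associator isomorphisms — formal composites of whiskered instances
of `α` and `α⁻¹` — between two bracketings of a fixed sequence of factors are
equal. -/
theorem pentagon_coherence {C : Type u} [Category.{v} C]
    (S : UnitalCompStruct C) (a b : BTree C) (m₁ m₂ : Move a b) :
    interp S.toCompStruct m₁ = interp S.toCompStruct m₂ :=
  PentagonCoherenceAux.move_unique S.toCompStruct m₁ m₂
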